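/- arXiv:1805.11699 — 3 statements merged into one kernel-verified Lean document; each statement's English description precedes it below -/
import Mathlib

section
/- Let P0, P1 be symmetric positive definite, A = (1/2) P0^{1/2} log(P0^{-1/2} P1 P0^{-1/2}) P0^{-1/2}, and P_t = exp(At) P0 exp(A't). Then P_t = P0^{1/2} (P0^{-1/2} P1 P0^{-1/2})^t P0^{1/2} for all real t, where the fractional power is defined via the matrix exponential and logarithm of the SPD matrix P0^{-1/2} P1 P0^{-1/2}. -/
open Matrix

/-- The symmetric positive definite square root of a positive definite matrix. -/
noncomputable def sqrtm {n : ℕ} {P : Matrix (Fin n) (Fin n) ℝ} (hP : P.PosDef) :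
    Matrix (Fin n) (Fin n) ℝ :=
  (hP.posSemidef.1.eigenvectorUnitary : Matrix (Fin n) (Fin n) ℝ) *
    diagonal ((↑) ∘ (√·) ∘ hP.posSemidef.1.eigenvalues) *
    (star hP.posSemidef.1.eigenvectorUnitary : Matrix (Fin n) (Fin n) ℝ)

/-- Squared Frobenius norm of a real matrix. -/
noncomputable def frobSq {n : ℕ} (M : Matrix (Fin n) (Fin n) ℝ) : ℝ := (M * Mᵀ).trace

theorem stmt_7 {n : ℕ} {P0 P1 : Matrix (Fin n) (Fin n) ℝ}
    (hP0 : P0.PosDef) (hP1 : P1.PosDef)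
    (L : Matrix (Fin n) (Fin n) ℝ) (hL : L.IsSymm)
    (hexpL : NormedSpace.exp L = (sqrtm hP0)⁻¹ * P1 * (sqrtm hP0)⁻¹)
    (A : Matrix (Fin n) (Fin n) ℝ)
    (hA : A = (1 / 2 : ℝ) • (sqrtm hP0 * L * (sqrtm hP0)⁻¹))
    (P : ℝ → Matrix (Fin n) (Fin n) ℝ)
    (hP : ∀ t : ℝ, P t = NormedSpace.exp (t • A) * P0 * NormedSpace.exp (t • Aᵀ)) :
    ∀ t : ℝ, P t = sqrtm hP0 * NormedSpace.exp (t • L) * sqrtm hP0 := by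
  intro t
  set S := sqrtm hP0 with hSdef
  have hSS : S * S = P0 := by
    have h1 := hP0.posSemidef.1.spectral_theorem
    rw [Unitary.conjStarAlgAut_apply] at h1
    have hUU := Unitary.coe_star_mul_self hP0.posSemidef.1.eigenvectorUnitary
    rw [hSdef, sqrtm]
    conv_rhs => rw [h1]
    calc _ = (hP0.posSemidef.1.eigenvectorUnitary : Matrix (Fin n) (Fin n) ℝ) *
          (diagonal ((↑) ∘ (√·) ∘ hP0.posSemidef.1.eigenvalues) *
          ((star hP0.posSemidef.1.eigenvectorUnitary : Matrix (Fin n) (Fin n) ℝ) *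
            (hP0.posSemidef.1.eigenvectorUnitary : Matrix (Fin n) (Fin n) ℝ)) *
          diagonal ((↑) ∘ (√·) ∘ hP0.posSemidef.1.eigenvalues)) *
          (star hP0.posSemidef.1.eigenvectorUnitary : Matrix (Fin n) (Fin n) ℝ) := by
            simp only [Matrix.mul_assoc]
      _ = _ := by
        rw [hUU, Matrix.mul_one, diagonal_mul_diagonal]
        congr 2
        congr 1
        funext i
        simp [Real.mul_self_sqrt (hP0.posSemidef.eigenvalues_nonneg i)]
  have hSsymm : Sᵀ = S := by
    rw [hSdef, sqrtm]
    simp [Matrix.transpose_mul, Matrix.mul_assoc, Unitary.coe_star, Matrix.star_eq_conjTranspose]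
  have hU : IsUnit S := by
    have hdet : S.det * S.det = P0.det := by rw [← Matrix.det_mul, hSS]
    have hd0 : P0.det ≠ 0 := ne_of_gt hP0.det_pos
    have : S.det ≠ 0 := by
      intro h
      rw [h, zero_mul] at hdet
      exact hd0 hdet.symm
    exact (Matrix.isUnit_iff_isUnit_det _).mpr (isUnit_iff_ne_zero.mpr this)
  -- rewrite t • A as a conjugation
  have htA : t • A = S * ((t / 2 : ℝ) • L) * S⁻¹ := by
    rw [hA, smul_smul]
    rw [Matrix.mul_smul, Matrix.smul_mul]
    ring_nf
  have hexpA : NormedSpace.exp (t • A) = S * NormedSpace.exp ((t / 2 : ℝ) • L) * S⁻¹ := by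
    rw [htA, Matrix.exp_conj S _ hU]
  have hSinvT : S⁻¹ᵀ = S⁻¹ := by rw [Matrix.transpose_nonsing_inv, hSsymm]
  have htAT : t • Aᵀ = S⁻¹ * ((t / 2 : ℝ) • L) * S := by
    have : (t • A)ᵀ = S⁻¹ * ((t / 2 : ℝ) • L) * S := by
      rw [htA]
      rw [Matrix.transpose_mul, Matrix.transpose_mul, hSinvT, hSsymm,
        Matrix.transpose_smul, hL.eq]
      noncomm_ring
    rw [← this, Matrix.transpose_smul]
  have hexpAT : NormedSpace.exp (t • Aᵀ) = S⁻¹ * NormedSpace.exp ((t / 2 : ℝ) • L) * S := by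
    rw [htAT, Matrix.exp_conj' S _ hU]
  have hmid : S⁻¹ * P0 * S⁻¹ = 1 := by
    have hd := (Matrix.isUnit_iff_isUnit_det _).mp hU
    calc S⁻¹ * P0 * S⁻¹ = (S⁻¹ * S) * (S * S⁻¹) := by rw [← hSS]; noncomm_ring
      _ = 1 := by rw [Matrix.nonsing_inv_mul _ hd, Matrix.mul_nonsing_inv _ hd, one_mul]
  have hEE : NormedSpace.exp ((t / 2 : ℝ) • L) * NormedSpace.exp ((t / 2 : ℝ) • L)
      = NormedSpace.exp (t • L) := by
    rw [← Matrix.exp_add_of_commute _ _ (Commute.refl _), ← add_smul]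
    norm_num
  rw [hP t, hexpA, hexpAT]
  calc S * NormedSpace.exp ((t / 2 : ℝ) • L) * S⁻¹ * P0 *
        (S⁻¹ * NormedSpace.exp ((t / 2 : ℝ) • L) * S)
      = S * NormedSpace.exp ((t / 2 : ℝ) • L) * (S⁻¹ * P0 * S⁻¹) *
        NormedSpace.exp ((t / 2 : ℝ) • L) * S := by noncomm_ring
    _ = S * (NormedSpace.exp ((t / 2 : ℝ) • L) * NormedSpace.exp ((t / 2 : ℝ) • L)) * S := by
        rw [hmid, Matrix.mul_one]; noncomm_ring
    _ = S * NormedSpace.exp (t • L) * S := by rw [hEE]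
end

section
/- For any symmetric positive definite P and any real n×n matrix A, 4 trace(P^{-1} A P A') ≥ 2 trace(A A) + 2 trace(P^{-1} A P A'), i.e., trace(P^{-1} A P A') ≥ trace(A A). -/
open Matrix

open scoped MatrixOrder

lemma trace_mul_transpose_nonneg {n : ℕ} (M : Matrix (Fin n) (Fin n) ℝ) :
    0 ≤ (M * Mᵀ).trace := by
  rw [Matrix.trace]
  apply Finset.sum_nonneg
  intro i _
  simp only [Matrix.diag_apply, Matrix.mul_apply, Matrix.transpose_apply]
  exact Finset.sum_nonneg fun j _ => mul_self_nonneg _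

theorem stmt_9 {n : ℕ} {P : Matrix (Fin n) (Fin n) ℝ} (hP : P.PosDef)
    (A : Matrix (Fin n) (Fin n) ℝ) :
    (A * A).trace ≤ (P⁻¹ * A * P * Aᵀ).trace := by
  set S := CFC.sqrt P with hSdef
  have hSS : S * S = P := CFC.sqrt_mul_sqrt_self P hP.posSemidef.nonneg
  have hSsym : Sᵀ = S := by
    have := (CFC.sqrt_nonneg P).posSemidef.1
    rw [Matrix.IsHermitian, Matrix.conjTranspose_eq_transpose_of_trivial] at this
    exact this
  have hdet : IsUnit S.det := by
    have hPdet : IsUnit P.det := isUnit_iff_ne_zero.mpr (ne_of_gt hP.det_pos)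
    rw [← hSS, Matrix.det_mul] at hPdet
    exact isUnit_of_mul_isUnit_left hPdet
  have hinv : S⁻¹ * S = 1 := Matrix.nonsing_inv_mul S hdet
  have hinv' : S * S⁻¹ = 1 := Matrix.mul_nonsing_inv S hdet
  have hPinv : P⁻¹ = S⁻¹ * S⁻¹ := by rw [← hSS, Matrix.mul_inv_rev]
  set B := S⁻¹ * A * S with hB
  have hBT : Bᵀ = S * Aᵀ * S⁻¹ := by
    rw [hB, Matrix.transpose_mul, Matrix.transpose_mul, hSsym,
      Matrix.transpose_nonsing_inv, hSsym, Matrix.mul_assoc]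
  have h1 : (A * A).trace = (B * B).trace := by
    have hBB : B * B = S⁻¹ * (A * A) * S := by
      rw [hB]
      calc S⁻¹ * A * S * (S⁻¹ * A * S)
          = S⁻¹ * (A * ((S * S⁻¹) * (A * S))) := by
            simp only [Matrix.mul_assoc]
        _ = S⁻¹ * (A * A) * S := by
            rw [hinv', Matrix.one_mul]; simp only [Matrix.mul_assoc]
    rw [hBB, Matrix.trace_mul_cycle, hinv', Matrix.one_mul]
  have h2 : (P⁻¹ * A * P * Aᵀ).trace = (B * Bᵀ).trace := by
    have hBBt : B * Bᵀ = S⁻¹ * (A * P * Aᵀ) * S⁻¹ := by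
      rw [hB, hBT, ← hSS]
      simp only [Matrix.mul_assoc]
    rw [hBBt]
    conv_rhs => rw [Matrix.trace_mul_cycle, ← hPinv]
    simp only [Matrix.mul_assoc]
  rw [h1, h2]
  have key := trace_mul_transpose_nonneg (B - Bᵀ)
  have expand : ((B - Bᵀ) * (B - Bᵀ)ᵀ).trace
      = 2 * (B * Bᵀ).trace - 2 * (B * B).trace := by
    have e1 : (Bᵀ * Bᵀ).trace = (B * B).trace := by
      rw [← Matrix.transpose_mul, Matrix.trace_transpose]
    have e2 : (Bᵀ * B).trace = (B * Bᵀ).trace := Matrix.trace_mul_comm _ _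
    simp only [Matrix.transpose_sub, Matrix.transpose_transpose, Matrix.sub_mul,
      Matrix.mul_sub, Matrix.trace_sub]
    rw [e1, e2]
    ring
  rw [expand] at key
  linarith
end

section
/- Let A be a real n×n matrix with symmetric part A_s and antisymmetric part A_a, ε real, P0 SPD, T_t = exp((1+ε) A_a t) exp((A_s + ε A_a') t), A_t = exp((1+ε) A_a t) A exp((1+ε) A_a' t), and P_t = T_t P0 T_t'. Then dP_t/dt = A_t P_t + P_t A_t'. -/
open Matrix

theorem stmt_13 {n : ℕ} (A : Matrix (Fin n) (Fin n) ℝ) (ε : ℝ)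
    {P0 : Matrix (Fin n) (Fin n) ℝ} (hP0 : P0.PosDef)
    (As Aa : Matrix (Fin n) (Fin n) ℝ)
    (hAs : As = (1 / 2 : ℝ) • (A + Aᵀ)) (hAa : Aa = (1 / 2 : ℝ) • (A - Aᵀ))
    (T At P : ℝ → Matrix (Fin n) (Fin n) ℝ)
    (hT : ∀ t : ℝ, T t = NormedSpace.exp (((1 + ε) * t) • Aa) *
        NormedSpace.exp (t • (As + ε • Aaᵀ)))
    (hAt : ∀ t : ℝ, At t = NormedSpace.exp (((1 + ε) * t) • Aa) * A *
        NormedSpace.exp (((1 + ε) * t) • Aaᵀ))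
    (hP : ∀ t : ℝ, P t = T t * P0 * (T t)ᵀ) :
    ∀ (t : ℝ) (i j : Fin n),
      HasDerivAt (fun s : ℝ => P s i j) ((At t * P t + P t * (At t)ᵀ) i j) t := by
  letI : SeminormedRing (Matrix (Fin n) (Fin n) ℝ) := Matrix.linftyOpSemiNormedRing
  letI : NormedRing (Matrix (Fin n) (Fin n) ℝ) := Matrix.linftyOpNormedRing
  letI : NormedAlgebra ℝ (Matrix (Fin n) (Fin n) ℝ) := Matrix.linftyOpNormedAlgebra
  intro t i j
  set B1 : Matrix (Fin n) (Fin n) ℝ := (1 + ε) • Aa with hB1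
  set B2 : Matrix (Fin n) (Fin n) ℝ := As + ε • Aaᵀ with hB2
  have hAaT : Aaᵀ = -Aa := by
    rw [hAa]; simp [Matrix.transpose_smul, Matrix.transpose_sub]; module
  have hsum : B1 + B2 = A := by
    rw [hB1, hB2, hAaT, hAs, hAa]; module
  -- derivative of T
  have h1 : HasDerivAt (fun s : ℝ => NormedSpace.exp (s • B1))
      (B1 * NormedSpace.exp (t • B1)) t := hasDerivAt_exp_smul_const' B1 t
  have h2 : HasDerivAt (fun s : ℝ => NormedSpace.exp (s • B2))
      (B2 * NormedSpace.exp (t • B2)) t := hasDerivAt_exp_smul_const' B2 t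
  have hTeq : T = fun s : ℝ => NormedSpace.exp (s • B1) * NormedSpace.exp (s • B2) := by
    funext s
    rw [hT s, hB1, smul_smul, mul_comm s]
  set E1 := NormedSpace.exp (t • B1) with hE1
  set E2 := NormedSpace.exp (t • B2) with hE2
  have hcomm : B1 * E1 = E1 * B1 :=
    (((Commute.refl B1).smul_right t).exp_right).eq
  have hkey : NormedSpace.exp (-(t • B1)) * E1 = 1 := by
    have hadd := NormedSpace.exp_add_of_commute_of_mem_ball (𝕂 := ℝ) ((Commute.refl (t • B1)).neg_left)
        ((NormedSpace.expSeries_radius_eq_top ℝ (Matrix (Fin n) (Fin n) ℝ)).symm ▸ edist_lt_top _ _)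
        ((NormedSpace.expSeries_radius_eq_top ℝ (Matrix (Fin n) (Fin n) ℝ)).symm ▸ edist_lt_top _ _)
    rw [neg_add_cancel, NormedSpace.exp_zero] at hadd
    exact hadd.symm
  have hAtT : At t * T t = E1 * A * E2 := by
    rw [hAt t, hT t]
    have h3 : ((1 + ε) * t) • Aaᵀ = -(t • B1) := by
      rw [hAaT, hB1]; module
    have h4 : ((1 + ε) * t) • Aa = t • B1 := by rw [hB1]; module
    rw [h3, h4, ← hE1, ← hE2]
    calc E1 * A * NormedSpace.exp (-(t • B1)) * (E1 * E2)
        = E1 * A * (NormedSpace.exp (-(t • B1)) * E1) * E2 := by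
          simp only [Matrix.mul_assoc]
      _ = E1 * A * E2 := by rw [hkey, Matrix.mul_one]
  have hTd0 : HasDerivAt T (E1 * A * E2) t := by
    rw [hTeq]
    refine (h1.mul h2).congr_deriv ?_
    rw [← hE1, ← hE2, ← hsum, Matrix.mul_add, Matrix.add_mul, ← hcomm]
    rw [hB2]
    noncomm_ring
  have hTd : HasDerivAt T (At t * T t) t := by rw [hAtT]; exact hTd0
  -- transpose
  have hTtd : HasDerivAt (fun s : ℝ => (T s)ᵀ) ((At t * T t)ᵀ) t := by
    have Lt : Matrix (Fin n) (Fin n) ℝ →L[ℝ] Matrix (Fin n) (Fin n) ℝ :=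
      LinearMap.toContinuousLinearMap
        ((Matrix.transposeLinearEquiv (Fin n) (Fin n) ℝ ℝ).toLinearMap)
    exact (LinearMap.toContinuousLinearMap
        ((Matrix.transposeLinearEquiv (Fin n) (Fin n) ℝ ℝ).toLinearMap)).hasFDerivAt.comp_hasDerivAt
        t hTd
  have hPd : HasDerivAt (fun s : ℝ => T s * P0 * (T s)ᵀ)
      (At t * P t + P t * (At t)ᵀ) t := by
    have := (hTd.mul_const P0).mul hTtd
    refine this.congr_deriv ?_
    rw [hP t, Matrix.transpose_mul]
    noncomm_ring
  have hPeq : (fun s : ℝ => P s i j) = fun s : ℝ => (T s * P0 * (T s)ᵀ) i j := by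
    funext s; rw [hP s]
  rw [hPeq]
  let L : Matrix (Fin n) (Fin n) ℝ →ₗ[ℝ] ℝ :=
    { toFun := fun M => M i j, map_add' := fun _ _ => rfl, map_smul' := fun _ _ => rfl }
  exact (LinearMap.toContinuousLinearMap L).hasFDerivAt.comp_hasDerivAt t hPd
end
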